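/- Let 0 < ξ ≤ 1, d ≥ 1, and let w_1,...,w_d be positive reals. Let H be a finite nonnegative Borel measure on the unit simplex S₊ = {u ∈ ℝ^d : u_j ≥ 0, Σ u_j = 1} satisfying ∫ u_j dH(u) = 1 for each j = 1,...,d. Define ρ_w(H) := ∫ (w_1 u_1^ξ + ... + w_d u_d^ξ)^{1/ξ} dH(u). Then Σ_{i=1}^{d} w_i^{1/ξ} ≤ ρ_w(H) ≤ (Σ_{i=1}^{d} w_i)^{1/ξ}. -/

import Mathlib

open MeasureTheory

/-- Hoeffding–Fréchet universal bounds (0 < ξ ≤ 1): for a finite measure `H` on the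
unit simplex with unit marginal moments, `Σ w_i^{1/ξ} ≤ ρ_w(H) ≤ (Σ w_i)^{1/ξ}`. -/
lemma myadd_rpow (a b : ℝ) (ha : 0 ≤ a) (hb : 0 ≤ b) {p : ℝ} (hp : 1 ≤ p) :
    a ^ p + b ^ p ≤ (a + b) ^ p := by
  lift a to NNReal using ha
  lift b to NNReal using hb
  exact_mod_cast NNReal.add_rpow_le_rpow_add a b hp

lemma mysum_rpow {ι : Type*} (s : Finset ι) (f : ι → ℝ) (hf : ∀ i ∈ s, 0 ≤ f i)
    {p : ℝ} (hp : 1 ≤ p) : ∑ i ∈ s, f i ^ p ≤ (∑ i ∈ s, f i) ^ p := by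
  classical
  induction s using Finset.induction with
  | empty => simp [Real.zero_rpow (by positivity : p ≠ 0)]
  | insert a s hx ih =>
    rw [Finset.sum_insert hx, Finset.sum_insert hx]
    have h1 : ∀ i ∈ s, 0 ≤ f i := fun i hi => hf i (Finset.mem_insert_of_mem hi)
    have h2 : 0 ≤ ∑ i ∈ s, f i := Finset.sum_nonneg h1
    calc f a ^ p + ∑ i ∈ s, f i ^ p ≤ f a ^ p + (∑ i ∈ s, f i) ^ p := by
          gcongr; exact ih h1
      _ ≤ (f a + ∑ i ∈ s, f i) ^ p :=
          myadd_rpow _ _ (hf a (Finset.mem_insert_self a s)) h2 hp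


theorem frechet_bounds_rho (d : ℕ) (hd : 1 ≤ d) (ξ : ℝ) (hξ0 : 0 < ξ) (hξ1 : ξ ≤ 1)
    (w : Fin d → ℝ) (hw : ∀ i, 0 < w i)
    (H : Measure (Fin d → ℝ)) [IsFiniteMeasure H]
    (hsupp : H {u | ¬ ((∀ j, 0 ≤ u j) ∧ ∑ j, u j = 1)} = 0)
    (hmarg : ∀ j, ∫ u, u j ∂H = 1) :
    ∑ i, (w i) ^ (1 / ξ) ≤ ∫ u, (∑ i, w i * (u i) ^ ξ) ^ (1 / ξ) ∂H ∧
    ∫ u, (∑ i, w i * (u i) ^ ξ) ^ (1 / ξ) ∂H ≤ (∑ i, w i) ^ (1 / ξ) := by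
  have hp : (1 : ℝ) ≤ 1 / ξ := by rw [le_div_iff₀ hξ0]; linarith
  set S := ∑ i, w i with hS
  have hS0 : 0 < S := Finset.sum_pos (fun i _ => hw i) ⟨⟨0, hd⟩, Finset.mem_univ _⟩
  have hae : ∀ᵐ u ∂H, (∀ j, 0 ≤ u j) ∧ ∑ j, u j = 1 := by
    rw [ae_iff]; exact hsupp
  -- pointwise exponent simplification
  have hexp : ∀ x : ℝ, 0 ≤ x → (x ^ ξ) ^ (1 / ξ) = x := fun x hx => by
    rw [← Real.rpow_mul hx, mul_one_div_cancel hξ0.ne', Real.rpow_one]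
  -- pointwise lower bound
  have hlb : ∀ u : Fin d → ℝ, (∀ j, 0 ≤ u j) →
      ∑ i, w i ^ (1 / ξ) * u i ≤ (∑ i, w i * u i ^ ξ) ^ (1 / ξ) := by
    intro u hu
    have key := mysum_rpow Finset.univ (fun i => w i * u i ^ ξ)
      (fun i _ => mul_nonneg (hw i).le (Real.rpow_nonneg (hu i) ξ)) hp
    calc ∑ i, w i ^ (1 / ξ) * u i = ∑ i, (w i * u i ^ ξ) ^ (1 / ξ) := by
          refine Finset.sum_congr rfl fun i _ => ?_
          rw [Real.mul_rpow (hw i).le (Real.rpow_nonneg (hu i) ξ), hexp _ (hu i)]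
      _ ≤ (∑ i, w i * u i ^ ξ) ^ (1 / ξ) := key
  -- pointwise upper bound
  have hub : ∀ u : Fin d → ℝ, (∀ j, 0 ≤ u j) →
      (∑ i, w i * u i ^ ξ) ^ (1 / ξ) ≤ S ^ (1 / ξ - 1) * ∑ i, w i * u i := by
    intro u hu
    set v : Fin d → ℝ := fun i => w i / S with hv
    have hv1 : ∑ i, v i = 1 := by
      rw [hv, ← Finset.sum_div]
      field_simp
      exact hS.symm
    have key := Real.rpow_arith_mean_le_arith_mean_rpow Finset.univ v (fun i => u i ^ ξ)
      (fun i _ => div_nonneg (hw i).le hS0.le) hv1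
      (fun i _ => Real.rpow_nonneg (hu i) ξ) hp
    have hsum_nonneg : 0 ≤ ∑ i, v i * u i ^ ξ :=
      Finset.sum_nonneg fun i _ => mul_nonneg (div_nonneg (hw i).le hS0.le)
        (Real.rpow_nonneg (hu i) ξ)
    calc (∑ i, w i * u i ^ ξ) ^ (1 / ξ)
        = (S * ∑ i, v i * u i ^ ξ) ^ (1 / ξ) := by
          have hbase : ∑ i, w i * u i ^ ξ = S * ∑ i, v i * u i ^ ξ := by
            rw [Finset.mul_sum]
            refine Finset.sum_congr rfl fun i _ => ?_
            simp only [hv]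
            field_simp
          rw [hbase]
      _ = S ^ (1 / ξ) * (∑ i, v i * u i ^ ξ) ^ (1 / ξ) :=
          Real.mul_rpow hS0.le hsum_nonneg
      _ ≤ S ^ (1 / ξ) * ∑ i, v i * (u i ^ ξ) ^ (1 / ξ) := by
          exact mul_le_mul_of_nonneg_left key (Real.rpow_nonneg hS0.le _)
      _ = S ^ (1 / ξ) * ∑ i, v i * u i := by
          congr 1
          exact Finset.sum_congr rfl fun i _ => by rw [hexp _ (hu i)]
      _ = S ^ (1 / ξ - 1) * ∑ i, w i * u i := by
          rw [Finset.mul_sum, Finset.mul_sum]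
          refine Finset.sum_congr rfl fun i _ => ?_
          rw [hv, Real.rpow_sub hS0, Real.rpow_one]
          field_simp
  -- coordinates are bounded by 1 a.e.
  have hcoord : ∀ᵐ u ∂H, ∀ j, 0 ≤ u j ∧ u j ≤ 1 := by
    filter_upwards [hae] with u hu j
    refine ⟨hu.1 j, ?_⟩
    calc u j ≤ ∑ k, u k := Finset.single_le_sum (fun k _ => hu.1 k) (Finset.mem_univ j)
      _ = 1 := hu.2
  -- integrability of coordinates
  have hint_j : ∀ j, Integrable (fun u : Fin d → ℝ => u j) H := by
    intro j
    refine (integrable_const (1 : ℝ)).mono' (measurable_pi_apply j).aestronglyMeasurable ?_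
    filter_upwards [hcoord] with u hu
    rw [Real.norm_eq_abs, abs_le]
    exact ⟨by linarith [(hu j).1], (hu j).2⟩
  -- measurability and integrability of the integrand
  have hfm : Measurable fun u : Fin d → ℝ => (∑ i, w i * u i ^ ξ) ^ (1 / ξ) := by
    have hc : Continuous fun u : Fin d → ℝ => (∑ i, w i * u i ^ ξ) ^ (1 / ξ) := by
      refine Continuous.rpow_const ?_ fun x => Or.inr (by positivity)
      exact continuous_finset_sum _ fun i _ => continuous_const.mul
        ((Real.continuous_rpow_const hξ0.le).comp (continuous_apply i))
    exact hc.measurable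
  have hint_f : Integrable (fun u : Fin d → ℝ => (∑ i, w i * u i ^ ξ) ^ (1 / ξ)) H := by
    refine (integrable_const (S ^ (1 / ξ))).mono' hfm.aestronglyMeasurable ?_
    filter_upwards [hae, hcoord] with u hu hc
    have h1 : (∑ i, w i * u i ^ ξ) ^ (1 / ξ) ≤ S ^ (1 / ξ - 1) * ∑ i, w i * u i :=
      hub u hu.1
    have h2 : ∑ i, w i * u i ≤ S := by
      refine Finset.sum_le_sum fun i _ => ?_
      nlinarith [(hc i).1, (hc i).2, hw i]
    have h3 : S ^ (1 / ξ - 1) * ∑ i, w i * u i ≤ S ^ (1 / ξ - 1) * S :=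
      mul_le_mul_of_nonneg_left h2 (Real.rpow_nonneg hS0.le _)
    have h4 : S ^ (1 / ξ - 1) * S = S ^ (1 / ξ) := by
      rw [Real.rpow_sub hS0, Real.rpow_one]
      field_simp
    have h0 : 0 ≤ (∑ i, w i * u i ^ ξ) ^ (1 / ξ) :=
      Real.rpow_nonneg (Finset.sum_nonneg fun i _ =>
        mul_nonneg (hw i).le (Real.rpow_nonneg (hu.1 i) ξ)) _
    rw [Real.norm_eq_abs, abs_of_nonneg h0]
    linarith
  -- lower bound
  have hint_lin : Integrable (fun u : Fin d → ℝ => ∑ i, w i ^ (1 / ξ) * u i) H :=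
    integrable_finset_sum _ fun i _ => (hint_j i).const_mul _
  have hlow : ∑ i, w i ^ (1 / ξ) ≤ ∫ u, (∑ i, w i * u i ^ ξ) ^ (1 / ξ) ∂H := by
    have h := integral_mono_ae hint_lin hint_f (hae.mono fun u hu => hlb u hu.1)
    have heq2 : ∫ u, (∑ i, w i ^ (1 / ξ) * u i) ∂H = ∑ i, w i ^ (1 / ξ) := by
      rw [integral_finset_sum _ (fun i _ => (hint_j i).const_mul _)]
      simp only [integral_const_mul, hmarg, mul_one]
    linarith [heq2 ▸ h]
  have hint_lin2 : Integrable (fun u : Fin d → ℝ => S ^ (1 / ξ - 1) * ∑ i, w i * u i) H :=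
    (integrable_finset_sum _ fun i _ => (hint_j i).const_mul _).const_mul _
  have hhigh : ∫ u, (∑ i, w i * u i ^ ξ) ^ (1 / ξ) ∂H ≤ S ^ (1 / ξ) := by
    have h := integral_mono_ae hint_f hint_lin2 (hae.mono fun u hu => hub u hu.1)
    have heq : ∫ u, S ^ (1 / ξ - 1) * ∑ i, w i * u i ∂H = S ^ (1 / ξ) := by
      rw [integral_const_mul, integral_finset_sum _ (fun i _ => (hint_j i).const_mul _)]
      simp only [integral_const_mul, hmarg, mul_one]
      rw [← hS, Real.rpow_sub hS0, Real.rpow_one]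
      field_simp
    linarith [h, heq ▸ h]
  exact ⟨hlow, hhigh⟩
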